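/- Let n be a natural number, let a, b ∈ ℝⁿ with aᵢ < bᵢ for all i, and let Ω = [a₁,b₁] × ⋯ × [aₙ,bₙ] be the closed box. Let α, β be real numbers and let ψ : ℝ × ℝⁿ → ℝ be three times continuously differentiable. Assume that ψ satisfies the Westervelt equation ∂ₜₜψ − Δψ = α Δ(∂ₜψ) + β ∂ₜ((∂ₜψ)²) at every point of ℝ × Ω, and that the homogeneous Neumann condition holds: for every t, every index i, and every x ∈ Ω with xᵢ = aᵢ or xᵢ = bᵢ, the partial derivative ∂ψ/∂xᵢ(t,x) = 0. Then the function t ↦ E(t) = ∫_Ω ½ |∇ψ(t,x)|² + (½ − (2β/3) ∂ₜψ(t,x)) (∂ₜψ(t,x))² dx is differentiable with derivative E'(t) = −α ∫_Ω |∇(∂ₜψ)(t,x)|² dx, where ∇ denotes the gradient in the spatial variable x. -/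

import Mathlib

open MeasureTheory

/-- Partial derivative in time of a function `f : ℝ × ℝⁿ → ℝ`. -/
noncomputable def Dt {n : ℕ} (f : ℝ × (Fin n → ℝ) → ℝ) (u : ℝ × (Fin n → ℝ)) : ℝ :=
  deriv (fun s => f (s, u.2)) u.1

/-- Spatial partial derivative in the `i`-th coordinate direction of `f : ℝ × ℝⁿ → ℝ`. -/
noncomputable def Dxi {n : ℕ} (i : Fin n) (f : ℝ × (Fin n → ℝ) → ℝ)
    (u : ℝ × (Fin n → ℝ)) : ℝ :=
  deriv (fun s : ℝ => f (u.1, u.2 + s • (Pi.single i 1 : Fin n → ℝ))) 0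

namespace Westervelt

variable {n : ℕ}

/-- Time derivative via the full Fréchet derivative. -/
noncomputable def DT (f : ℝ × (Fin n → ℝ) → ℝ) (u : ℝ × (Fin n → ℝ)) : ℝ :=
  fderiv ℝ f u (1, 0)

/-- `i`-th spatial derivative via the full Fréchet derivative. -/
noncomputable def DX (i : Fin n) (f : ℝ × (Fin n → ℝ) → ℝ) (u : ℝ × (Fin n → ℝ)) : ℝ :=
  fderiv ℝ f u (0, Pi.single i 1)

lemma contDiff_DT {k : ℕ} {f : ℝ × (Fin n → ℝ) → ℝ}
    (hf : ContDiff ℝ (k + 1 : ℕ) f) : ContDiff ℝ (k : ℕ) (DT f) :=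
  (hf.fderiv_right (by norm_cast)).clm_apply contDiff_const

lemma contDiff_DX {k : ℕ} {f : ℝ × (Fin n → ℝ) → ℝ} (i : Fin n)
    (hf : ContDiff ℝ (k + 1 : ℕ) f) : ContDiff ℝ (k : ℕ) (DX i f) :=
  (hf.fderiv_right (by norm_cast)).clm_apply contDiff_const

lemma hasDerivAt_slice_t {f : ℝ × (Fin n → ℝ) → ℝ} {t : ℝ} {x : Fin n → ℝ}
    (hf : DifferentiableAt ℝ f (t, x)) :
    HasDerivAt (fun s => f (s, x)) (DT f (t, x)) t := by
  have h : HasDerivAt (fun s : ℝ => ((s, x) : ℝ × (Fin n → ℝ))) (1, 0) t :=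
    (hasDerivAt_id t).prodMk (hasDerivAt_const t x)
  exact hf.hasFDerivAt.comp_hasDerivAt t h

lemma Dt_eq {f : ℝ × (Fin n → ℝ) → ℝ} {t : ℝ} {x : Fin n → ℝ}
    (hf : DifferentiableAt ℝ f (t, x)) : Dt f (t, x) = DT f (t, x) :=
  (hasDerivAt_slice_t hf).deriv

lemma Dt_eq_fun {f : ℝ × (Fin n → ℝ) → ℝ} (hf : Differentiable ℝ f) : Dt f = DT f :=
  funext fun u => by obtain ⟨t, x⟩ := u; exact Dt_eq (hf _)

lemma hasDerivAt_slice_x {f : ℝ × (Fin n → ℝ) → ℝ} (i : Fin n) {t : ℝ} {x : Fin n → ℝ}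
    (hf : DifferentiableAt ℝ f (t, x)) :
    HasDerivAt (fun s : ℝ => f (t, x + s • (Pi.single i 1 : Fin n → ℝ)))
      (DX i f (t, x)) 0 := by
  have h : HasDerivAt (fun s : ℝ => ((t, x + s • (Pi.single i 1 : Fin n → ℝ)) : ℝ × (Fin n → ℝ)))
      (0, Pi.single i 1) 0 := by
    refine (hasDerivAt_const 0 t).prodMk ?_
    simpa using ((hasDerivAt_id (0:ℝ)).smul_const
      (Pi.single i 1 : Fin n → ℝ)).const_add x
  have hf' : HasFDerivAt f (fderiv ℝ f (t, x)) (t, x + (0:ℝ) • (Pi.single i 1 : Fin n → ℝ)) := by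
    simpa using hf.hasFDerivAt
  exact hf'.comp_hasDerivAt 0 h

lemma Dxi_eq {f : ℝ × (Fin n → ℝ) → ℝ} (i : Fin n) {t : ℝ} {x : Fin n → ℝ}
    (hf : DifferentiableAt ℝ f (t, x)) : Dxi i f (t, x) = DX i f (t, x) :=
  (hasDerivAt_slice_x i hf).deriv

lemma Dxi_eq_fun {f : ℝ × (Fin n → ℝ) → ℝ} (i : Fin n) (hf : Differentiable ℝ f) :
    Dxi i f = DX i f :=
  funext fun u => by obtain ⟨t, x⟩ := u; exact Dxi_eq i (hf _)

lemma snd_deriv_symm {f : ℝ × (Fin n → ℝ) → ℝ} (v w u : ℝ × (Fin n → ℝ))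
    (hf : ContDiff ℝ 2 f) :
    fderiv ℝ (fun y => fderiv ℝ f y w) u v = fderiv ℝ (fun y => fderiv ℝ f y v) u w := by
  have hd : DifferentiableAt ℝ (fderiv ℝ f) u :=
    ((hf.fderiv_right (m := 1) (by norm_num)).differentiable (by norm_num)).differentiableAt
  have key : ∀ p q : ℝ × (Fin n → ℝ),
      fderiv ℝ (fun y => fderiv ℝ f y q) u p = fderiv ℝ (fderiv ℝ f) u p q := by
    intro p q
    rw [fderiv_clm_apply hd (differentiableAt_const q)]
    simp
  rw [key v w, key w v]
  exact (hf.contDiffAt.isSymmSndFDerivAt (by norm_num)) v w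

lemma DT_DX_comm {f : ℝ × (Fin n → ℝ) → ℝ} (i : Fin n) (u : ℝ × (Fin n → ℝ))
    (hf : ContDiff ℝ 2 f) : DT (DX i f) u = DX i (DT f) u :=
  snd_deriv_symm _ _ u hf

lemma DX_mul {f g : ℝ × (Fin n → ℝ) → ℝ} (i : Fin n) {u : ℝ × (Fin n → ℝ)}
    (hf : DifferentiableAt ℝ f u) (hg : DifferentiableAt ℝ g u) :
    DX i (fun y => f y * g y) u = DX i f u * g u + f u * DX i g u := by
  simp only [DX, fderiv_fun_mul hf hg]
  simp only [ContinuousLinearMap.add_apply, ContinuousLinearMap.smul_apply, smul_eq_mul]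
  ring

lemma DX_add {f g : ℝ × (Fin n → ℝ) → ℝ} (i : Fin n) {u : ℝ × (Fin n → ℝ)}
    (hf : DifferentiableAt ℝ f u) (hg : DifferentiableAt ℝ g u) :
    DX i (fun y => f y + g y) u = DX i f u + DX i g u := by
  simp only [DX, fderiv_fun_add hf hg]; simp

lemma DX_const_mul {f : ℝ × (Fin n → ℝ) → ℝ} (c : ℝ) (i : Fin n)
    {u : ℝ × (Fin n → ℝ)} (hf : DifferentiableAt ℝ f u) :
    DX i (fun y => c * f y) u = c * DX i f u := by
  simp only [DX, fderiv_const_mul hf]; simp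

lemma fderiv_slice_x {F : ℝ × (Fin n → ℝ) → ℝ} (i : Fin n) (t : ℝ) (x : Fin n → ℝ)
    (hF : DifferentiableAt ℝ F (t, x)) :
    fderiv ℝ (fun y => F (t, y)) x (Pi.single i 1) = DX i F (t, x) := by
  have h : HasFDerivAt (fun y => F (t, y))
      ((fderiv ℝ F (t, x)).comp (ContinuousLinearMap.inr ℝ ℝ (Fin n → ℝ))) x :=
    hF.hasFDerivAt.comp x (hasFDerivAt_prodMk_right t x)
  rw [h.fderiv]
  simp [DX]

open Set in
lemma integral_divergence_eq_zero (n : ℕ) (a b : Fin n → ℝ) (hab : ∀ i, a i ≤ b i)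
    (f : Fin n → (Fin n → ℝ) → ℝ) (hf : ∀ i, ContDiff ℝ 1 (f i))
    (hbd : ∀ i, ∀ x ∈ Set.Icc a b, (x i = a i ∨ x i = b i) → f i x = 0) :
    (∫ x in Set.Icc a b, ∑ i, fderiv ℝ (f i) x (Pi.single i 1)) = 0 := by
  cases n with
  | zero => simp
  | succ m =>
    have hcont : ∀ i : Fin (m+1), Continuous fun x => fderiv ℝ (f i) x (Pi.single i 1) := by
      intro i
      exact (((hf i).fderiv_right (m := 0) (by norm_num)).continuous).clm_apply continuous_const
    rw [MeasureTheory.integral_divergence_of_hasFDerivAt_off_countable' a b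
      hab f (fun i x => fderiv ℝ (f i) x) ∅ Set.countable_empty
      (fun i => ((hf i).continuous).continuousOn)
      (fun x _ i => (((hf i).differentiable one_ne_zero) x).hasFDerivAt)
      (((continuous_finset_sum _ fun i _ => hcont i).continuousOn).integrableOn_compact
        isCompact_Icc)]
    apply Finset.sum_eq_zero
    intro i _
    have key : ∀ c : ℝ, (c = a i ∨ c = b i) →
        (∫ x in Set.Icc (a ∘ i.succAbove) (b ∘ i.succAbove), f i (i.insertNth c x)) = 0 := by
      intro c hc
      rw [MeasureTheory.setIntegral_congr_fun measurableSet_Icc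
        (g := fun _ => (0:ℝ)) ?_, MeasureTheory.integral_zero]
      intro x hx
      have hc' : c ∈ Set.Icc (a i) (b i) := by
        rcases hc with h | h <;> rw [h]
        exacts [⟨le_rfl, hab i⟩, ⟨hab i, le_rfl⟩]
      have hmem : i.insertNth c x ∈ Set.Icc a b := Fin.insertNth_mem_Icc.2 ⟨hc', hx⟩
      have happ : (i.insertNth c x : Fin (m+1) → ℝ) i = c := by simp
      exact hbd i _ hmem (by rw [happ]; exact hc)
    rw [key (b i) (Or.inr rfl), key (a i) (Or.inl rfl), sub_zero]

end Westervelt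
namespace Westervelt

/-- The pointwise time derivative of the energy density. -/
noncomputable def Gfun {n : ℕ} (β : ℝ) (ψ : ℝ × (Fin n → ℝ) → ℝ)
    (u : ℝ × (Fin n → ℝ)) : ℝ :=
  (∑ i, DX i ψ u * DX i (DT ψ) u) + DT ψ u * DT (DT ψ) u
    - 2 * β * (DT ψ u ^ 2 * DT (DT ψ) u)

/-- The flux vector field. -/
noncomputable def Ffun {n : ℕ} (α : ℝ) (ψ : ℝ × (Fin n → ℝ) → ℝ) (i : Fin n)
    (u : ℝ × (Fin n → ℝ)) : ℝ :=
  DT ψ u * DX i ψ u + α * (DT ψ u * DX i (DT ψ) u)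

end Westervelt

open Westervelt

/-- Energy identity (1.4) of the paper for classical solutions of the Westervelt
equation on a box `Ω = [a₁,b₁] × ⋯ × [aₙ,bₙ]` with homogeneous Neumann boundary
conditions: `d/dt ∫_Ω ½|∇ψ|² + (½ − (2β/3)∂ₜψ)(∂ₜψ)² dx = −α ∫_Ω |∇∂ₜψ|² dx`. -/
theorem westervelt_energy_identity_box (n : ℕ) (a b : Fin n → ℝ)
    (hab : ∀ i, a i < b i) (α β : ℝ)
    (ψ : ℝ × (Fin n → ℝ) → ℝ) (hψ : ContDiff ℝ 3 ψ)
    (hwest : ∀ (t : ℝ), ∀ x ∈ Set.Icc a b,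
      Dt (Dt ψ) (t, x) - (∑ i, Dxi i (Dxi i ψ) (t, x))
        = α * (∑ i, Dxi i (Dxi i (Dt ψ)) (t, x))
          + β * Dt (fun u => (Dt ψ u) ^ 2) (t, x))
    (hbc : ∀ (t : ℝ) (i : Fin n), ∀ x ∈ Set.Icc a b,
      (x i = a i ∨ x i = b i) → Dxi i ψ (t, x) = 0) :
    ∀ t : ℝ, HasDerivAt (fun s : ℝ => ∫ x in Set.Icc a b,
        ((1 / 2) * ∑ i, (Dxi i ψ (s, x)) ^ 2)
          + (1 / 2 - (2 * β / 3) * Dt ψ (s, x)) * (Dt ψ (s, x)) ^ 2)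
      (-α * ∫ x in Set.Icc a b, ∑ i, (Dxi i (Dt ψ) (t, x)) ^ 2) t := by
  intro t
  -- smoothness bookkeeping
  have hψ' : ContDiff ℝ ((2:ℕ) + 1 : ℕ) ψ := by exact_mod_cast hψ
  have hψ2 : ContDiff ℝ 2 ψ := hψ.of_le (by norm_num)
  have hψd : Differentiable ℝ ψ := hψ.differentiable (by norm_num)
  have hp2 : ContDiff ℝ ((1:ℕ) + 1 : ℕ) (DT ψ) := contDiff_DT hψ'
  have hq2 : ∀ i, ContDiff ℝ ((1:ℕ) + 1 : ℕ) (DX i ψ) := fun i => contDiff_DX i hψ'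
  have hpt1 : ContDiff ℝ ((0:ℕ) + 1 : ℕ) (DT (DT ψ)) := contDiff_DT hp2
  have hpi1 : ∀ i, ContDiff ℝ ((0:ℕ) + 1 : ℕ) (DX i (DT ψ)) := fun i => contDiff_DX i hp2
  have hqx1 : ∀ i, ContDiff ℝ ((0:ℕ) + 1 : ℕ) (DX i (DX i ψ)) := fun i => contDiff_DX i (hq2 i)
  have hd_p : Differentiable ℝ (DT ψ) := hp2.differentiable (by norm_num)
  have hd_q : ∀ i, Differentiable ℝ (DX i ψ) := fun i => (hq2 i).differentiable (by norm_num)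
  have hd_pt : Differentiable ℝ (DT (DT ψ)) := hpt1.differentiable (by norm_num)
  have hd_pi : ∀ i, Differentiable ℝ (DX i (DT ψ)) :=
    fun i => (hpi1 i).differentiable (by norm_num)
  -- conversions of the statement derivatives
  have e1 : Dt ψ = DT ψ := Dt_eq_fun hψd
  have e2 : ∀ i, Dxi i ψ = DX i ψ := fun i => Dxi_eq_fun i hψd
  have e3 : ∀ i, Dxi i (DT ψ) = DX i (DT ψ) := fun i => Dxi_eq_fun i hd_p
  have e4 : ∀ i, Dxi i (DX i ψ) = DX i (DX i ψ) := fun i => Dxi_eq_fun i (hd_q i)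
  have e5 : ∀ i, Dxi i (DX i (DT ψ)) = DX i (DX i (DT ψ)) := fun i => Dxi_eq_fun i (hd_pi i)
  have e6 : Dt (DT ψ) = DT (DT ψ) := Dt_eq_fun hd_p
  simp only [e1, e2, e3]
  -- clean form of the PDE
  have hpde : ∀ s : ℝ, ∀ x ∈ Set.Icc a b,
      DT (DT ψ) (s, x) - ∑ i, DX i (DX i ψ) (s, x)
        = α * ∑ i, DX i (DX i (DT ψ)) (s, x)
          + β * (2 * DT ψ (s, x) * DT (DT ψ) (s, x)) := by
    intro s x hx
    have H := hwest s x hx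
    simp only [e1, e2, e3, e4, e5, e6] at H
    have hsq : deriv (fun s' => DT ψ (s', x) ^ 2) s
        = 2 * DT ψ (s, x) ^ (2 - 1) * DT (DT ψ) (s, x) :=
      HasDerivAt.deriv ((hasDerivAt_slice_t (hd_p (s, x))).pow 2)
    simp only [Dt] at H
    rw [hsq] at H
    linear_combination H
  -- time derivative of the energy density
  have hGder : ∀ (s : ℝ) (x : Fin n → ℝ),
      HasDerivAt (fun s' : ℝ =>
          1 / 2 * ∑ i, DX i ψ (s', x) ^ 2
            + (1 / 2 - 2 * β / 3 * DT ψ (s', x)) * DT ψ (s', x) ^ 2)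
        (Gfun β ψ (s, x)) s := by
    intro s x
    have hp' : HasDerivAt (fun s' => DT ψ (s', x)) (DT (DT ψ) (s, x)) s :=
      hasDerivAt_slice_t (hd_p (s, x))
    have hq' : ∀ i, HasDerivAt (fun s' => DX i ψ (s', x)) (DX i (DT ψ) (s, x)) s := by
      intro i
      have h0 := hasDerivAt_slice_t ((hd_q i) (s, x))
      rwa [DT_DX_comm i _ hψ2] at h0
    have h1 : HasDerivAt (fun s' => ∑ i, DX i ψ (s', x) ^ 2)
        (∑ i, (2:ℕ) * DX i ψ (s, x) ^ (2 - 1) * DX i (DT ψ) (s, x)) s :=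
      HasDerivAt.fun_sum fun i _ => (hq' i).pow 2
    have h2 := h1.const_mul (1 / 2 : ℝ)
    have h3 := (hp'.const_mul (2 * β / 3)).const_sub (1 / 2 : ℝ)
    have h4 := hp'.pow 2
    have h5 := h3.mul h4
    have h6 := h2.add h5
    refine h6.congr_deriv ?_
    have hhalf : (1:ℝ) / 2 * ∑ i, ((2:ℕ):ℝ) * DX i ψ (s, x) ^ (2 - 1) * DX i (DT ψ) (s, x)
        = ∑ i, DX i ψ (s, x) * DX i (DT ψ) (s, x) := by
      rw [Finset.mul_sum]
      exact Finset.sum_congr rfl fun i _ => by push_cast; ring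
    rw [hhalf]
    simp only [Gfun, Pi.pow_apply]
    push_cast
    ring
  -- expansion of the flux divergence
  have expand : ∀ (i : Fin n) (x : Fin n → ℝ),
      DX i (Ffun α ψ i) (t, x)
        = DX i ψ (t, x) * DX i (DT ψ) (t, x) + DT ψ (t, x) * DX i (DX i ψ) (t, x)
          + α * (DX i (DT ψ) (t, x) ^ 2 + DT ψ (t, x) * DX i (DX i (DT ψ)) (t, x)) := by
    intro i x
    have hd1 : DifferentiableAt ℝ (fun y => DT ψ y * DX i ψ y) (t, x) :=
      (hd_p _).mul ((hd_q i) _)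
    have hd2' : DifferentiableAt ℝ (fun y => DT ψ y * DX i (DT ψ) y) (t, x) :=
      (hd_p _).mul ((hd_pi i) _)
    have hd2 : DifferentiableAt ℝ (fun y => α * (DT ψ y * DX i (DT ψ) y)) (t, x) :=
      hd2'.const_mul α
    have ea := DX_add i hd1 hd2
    have eb := DX_mul i (hd_p (t, x)) ((hd_q i) (t, x))
    have ec := DX_const_mul α i hd2'
    have ed := DX_mul i (hd_p (t, x)) ((hd_pi i) (t, x))
    have : DX i (Ffun α ψ i) (t, x)
        = DX i (fun y => DT ψ y * DX i ψ y + α * (DT ψ y * DX i (DT ψ) y)) (t, x) := rfl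
    rw [this, ea, eb, ec, ed]
    ring
  -- the key pointwise identity on Ω at time t
  have hkey : ∀ x ∈ Set.Icc a b,
      Gfun β ψ (t, x)
        = (∑ i, DX i (Ffun α ψ i) (t, x)) - α * ∑ i, DX i (DT ψ) (t, x) ^ 2 := by
    intro x hx
    have hsum : ∑ i, DX i (Ffun α ψ i) (t, x)
        = (∑ i, DX i ψ (t, x) * DX i (DT ψ) (t, x))
          + DT ψ (t, x) * ∑ i, DX i (DX i ψ) (t, x)
          + α * ∑ i, DX i (DT ψ) (t, x) ^ 2
          + α * (DT ψ (t, x) * ∑ i, DX i (DX i (DT ψ)) (t, x)) := by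
      rw [Finset.sum_congr rfl fun i _ => expand i x]
      simp only [mul_add, Finset.sum_add_distrib, ← Finset.mul_sum]
      ring
    rw [hsum]
    simp only [Gfun]
    linear_combination DT ψ (t, x) * hpde t x hx
  -- smoothness of the flux
  have hF1 : ∀ i, ContDiff ℝ ((0:ℕ) + 1 : ℕ) (Ffun α ψ i) := by
    intro i
    have : ContDiff ℝ ((0:ℕ) + 1 : ℕ)
        (fun u => DT ψ u * DX i ψ u + α * (DT ψ u * DX i (DT ψ) u)) :=
      ((hp2.of_le (by norm_num)).mul ((hq2 i).of_le (by norm_num))).add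
        (contDiff_const.mul ((hp2.of_le (by norm_num)).mul (hpi1 i)))
    exact this
  -- boundary vanishing of the flux
  have hvanish : ∀ (i : Fin n), ∀ y ∈ Set.Icc a b, (y i = a i ∨ y i = b i) →
      Ffun α ψ i (t, y) = 0 := by
    intro i y hy hcase
    have hq0 : DX i ψ (t, y) = 0 := by
      rw [← e2 i]; exact hbc t i y hy hcase
    have hslice : (fun s : ℝ => DX i ψ (s, y)) = fun _ => (0:ℝ) := by
      funext s
      rw [← e2 i]; exact hbc s i y hy hcase
    have hpi0 : DX i (DT ψ) (t, y) = 0 := by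
      rw [← DT_DX_comm i _ hψ2, ← Dt_eq ((hd_q i) (t, y))]
      show deriv (fun s : ℝ => DX i ψ (s, y)) t = 0
      rw [hslice]
      simp
    show DT ψ (t, y) * DX i ψ (t, y) + α * (DT ψ (t, y) * DX i (DT ψ) (t, y)) = 0
    rw [hq0, hpi0]
    ring
  -- divergence integral vanishes
  have hdiv : (∫ x in Set.Icc a b, ∑ i, DX i (Ffun α ψ i) (t, x)) = 0 := by
    have hcongr : (∫ x in Set.Icc a b, ∑ i, DX i (Ffun α ψ i) (t, x))
        = ∫ x in Set.Icc a b,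
            ∑ i, fderiv ℝ (fun y => Ffun α ψ i (t, y)) x (Pi.single i 1) := by
      congr 1
      funext x
      exact Finset.sum_congr rfl fun i _ =>
        (fderiv_slice_x i t x (((hF1 i).differentiable (by norm_num)) (t, x))).symm
    rw [hcongr]
    exact integral_divergence_eq_zero n a b (fun i => (hab i).le)
      (fun i y => Ffun α ψ i (t, y))
      (fun i => ((hF1 i).of_le (by norm_num)).comp (contDiff_const.prodMk contDiff_id))
      (fun i y hy hc => hvanish i y hy hc)
  -- continuity facts
  have cp : Continuous (DT ψ) := hp2.continuous
  have cpt : Continuous (DT (DT ψ)) := hpt1.continuous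
  have cq : ∀ i, Continuous (DX i ψ) := fun i => (hq2 i).continuous
  have cpi : ∀ i, Continuous (DX i (DT ψ)) := fun i => (hpi1 i).continuous
  have hGcont : Continuous (Gfun β ψ (n := n)) := by
    have : Continuous (fun u : ℝ × (Fin n → ℝ) =>
        (∑ i, DX i ψ u * DX i (DT ψ) u) + DT ψ u * DT (DT ψ) u
          - 2 * β * (DT ψ u ^ 2 * DT (DT ψ) u)) :=
      ((continuous_finset_sum _ fun i _ => (cq i).mul (cpi i)).add
        (cp.mul cpt)).sub (continuous_const.mul ((cp.pow 2).mul cpt))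
    exact this
  have hIcont : Continuous (fun u : ℝ × (Fin n → ℝ) =>
      1 / 2 * ∑ i, DX i ψ u ^ 2 + (1 / 2 - 2 * β / 3 * DT ψ u) * DT ψ u ^ 2) :=
    (continuous_const.mul (continuous_finset_sum _ fun i _ => (cq i).pow 2)).add
      (((continuous_const.sub (continuous_const.mul cp))).mul (cp.pow 2))
  -- bound on a compact neighbourhood
  obtain ⟨C, hC⟩ :=
    ((isCompact_Icc (a := t - 1) (b := t + 1)).prod
      (isCompact_Icc (a := a) (b := b))).exists_bound_of_continuousOn
      hGcont.continuousOn
  -- differentiate under the integral sign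
  have main := (hasDerivAt_integral_of_dominated_loc_of_deriv_le
    (μ := volume.restrict (Set.Icc a b)) (x₀ := t)
    (F := fun s x =>
      1 / 2 * ∑ i, DX i ψ (s, x) ^ 2
        + (1 / 2 - 2 * β / 3 * DT ψ (s, x)) * DT ψ (s, x) ^ 2)
    (F' := fun s x => Gfun β ψ (s, x)) (bound := fun _ => C)
    (Metric.ball_mem_nhds t one_pos)
    (Filter.Eventually.of_forall fun s =>
      ((hIcont.comp (Continuous.prodMk_right s)).aestronglyMeasurable))
    (((hIcont.comp (Continuous.prodMk_right t)).continuousOn).integrableOn_compact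
      isCompact_Icc)
    ((hGcont.comp (Continuous.prodMk_right t)).aestronglyMeasurable)
    ?hbound
    ((integrable_const_iff).2 (Or.inr (by
      exact isFiniteMeasure_restrict.2 isCompact_Icc.measure_lt_top.ne)))
    (Filter.Eventually.of_forall fun x s _ => hGder s x)).2
  case hbound =>
    refine (MeasureTheory.ae_restrict_mem measurableSet_Icc).mono fun x hx s hs => ?_
    have hst : |s - t| < 1 := by simpa [Real.dist_eq] using hs
    have h1 := abs_lt.1 hst
    exact hC (s, x) ⟨⟨by linarith [h1.1], by linarith [h1.2]⟩, hx⟩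
  refine main.congr_deriv ?_
  -- value of the derivative
  have hInt1 : IntegrableOn (fun x => ∑ i, DX i (Ffun α ψ i) (t, x)) (Set.Icc a b) := by
    have : Continuous fun x => ∑ i, DX i (Ffun α ψ i) (t, x) := by
      refine continuous_finset_sum _ fun i _ => ?_
      have hc : Continuous (DX i (Ffun α ψ i)) := (contDiff_DX i (hF1 i)).continuous
      exact hc.comp (Continuous.prodMk_right t)
    exact this.continuousOn.integrableOn_compact isCompact_Icc
  have hInt2 : IntegrableOn (fun x => α * ∑ i, DX i (DT ψ) (t, x) ^ 2) (Set.Icc a b) := by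
    have : Continuous fun x => α * ∑ i, DX i (DT ψ) (t, x) ^ 2 :=
      continuous_const.mul ((continuous_finset_sum _ fun i _ =>
        ((cpi i).pow 2)).comp (Continuous.prodMk_right t))
    exact this.continuousOn.integrableOn_compact isCompact_Icc
  rw [MeasureTheory.setIntegral_congr_fun measurableSet_Icc hkey,
    MeasureTheory.integral_sub hInt1 hInt2, hdiv, MeasureTheory.integral_const_mul,
    zero_sub, neg_mul]
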